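/- In the Thue–Morse sequence (t_n)_{n≥1} over the alphabet {2,3} (fixed point of the substitution 2↦23, 3↦32, starting with 2), define t*_n = t_1 t_2 ⋯ t_n (the product of the first n terms). Every t*_n has the form a·6^k with a ∈ {1,2,3}, and the set U_a = {k ≥ 0 : a·6^k = t*_m for some m} has natural density d_1 = 1/2, d_2 = 1/4, d_3 = 1/4 respectively (density inside the index set of the sequence). -/

import Mathlib

open MeasureTheory Filter Topology

/-- The Thue–Morse sequence over the alphabet `{2,3}` (indexed from 1, starting with 2):
`tm n = 2` iff the binary digit sum of `n - 1` is even. -/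
def tm (n : ℕ) : ℕ := if Even ((Nat.digits 2 (n - 1)).sum) then 2 else 3

/-- Partial products `t*_n = t_1 t_2 ⋯ t_n` of the Thue–Morse sequence over `{2,3}`. -/
def tmProd (n : ℕ) : ℕ := ∏ k ∈ Finset.Icc 1 n, tm k

/-- Binary digit sum. -/
def s (n : ℕ) : ℕ := (Nat.digits 2 n).sum

lemma s_two_mul (j : ℕ) : s (2*j) = s j := by
  rcases Nat.eq_zero_or_pos j with h | h
  · simp [h, s]
  · unfold s
    rw [Nat.digits_def' (by norm_num) (by omega), Nat.mul_mod_right,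
      Nat.mul_div_cancel_left _ (by norm_num)]
    simp

lemma s_two_mul_add_one (j : ℕ) : s (2*j+1) = s j + 1 := by
  unfold s
  rw [Nat.digits_def' (by norm_num) (by omega)]
  have h1 : (2*j+1) % 2 = 1 := by omega
  have h2 : (2*j+1) / 2 = j := by omega
  rw [h1, h2]; simp [Nat.add_comm]

lemma tm_odd (j : ℕ) : tm (2*j+1) = if Even (s j) then 2 else 3 := by
  have : 2*j+1-1 = 2*j := by omega
  rw [tm, this, show (Nat.digits 2 (2*j)).sum = s (2*j) from rfl, s_two_mul]

lemma tm_even (j : ℕ) : tm (2*j+2) = if Even (s j) then 3 else 2 := by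
  have : 2*j+2-1 = 2*j+1 := by omega
  rw [tm, this, show (Nat.digits 2 (2*j+1)).sum = s (2*j+1) from rfl, s_two_mul_add_one]
  rcases Nat.even_or_odd (s j) with h | h
  · simp [h, Nat.even_add_one, Nat.not_even_iff_odd.mpr (Even.add_one h)]
  · simp [Nat.not_even_iff_odd.mpr h, Odd.add_one h]

lemma tmProd_succ (n : ℕ) : tmProd (n+1) = tmProd n * tm (n+1) := by
  rw [tmProd, tmProd, Finset.prod_Icc_succ_top (by omega)]

lemma tmProd_even (j : ℕ) : tmProd (2*j) = 6^j := by
  induction j with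
  | zero => simp [tmProd]
  | succ j ih =>
    have : 2*(j+1) = (2*j+1)+1 := by ring
    rw [this, tmProd_succ, show 2*j+1 = (2*j)+1 from rfl, tmProd_succ, ih,
      show (2*j)+1 = 2*j+1 from rfl, tm_odd, show 2*j+1+1 = 2*j+2 from rfl, tm_even]
    rcases Nat.even_or_odd (s j) with h | h
    · simp [h]; ring
    · simp [Nat.not_even_iff_odd.mpr h]; ring

lemma tmProd_odd (j : ℕ) : tmProd (2*j+1) = (if Even (s j) then 2 else 3) * 6^j := by
  rw [show 2*j+1 = (2*j)+1 from rfl, tmProd_succ, tmProd_even, tm_odd, mul_comm]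

lemma f62 : (Nat.factorization 6) 2 = 1 := by
  rw [show (6:ℕ)=2*3 by norm_num, Nat.factorization_mul (by norm_num) (by norm_num)]
  simp [Nat.prime_two.factorization, Nat.prime_three.factorization, Finsupp.single_apply]

lemma f63 : (Nat.factorization 6) 3 = 1 := by
  rw [show (6:ℕ)=2*3 by norm_num, Nat.factorization_mul (by norm_num) (by norm_num)]
  simp [Nat.prime_two.factorization, Nat.prime_three.factorization, Finsupp.single_apply]

lemma fact_aux (a j : ℕ) (ha : a ≠ 0) :
    (a * 6^j).factorization 2 = a.factorization 2 + j ∧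
    (a * 6^j).factorization 3 = a.factorization 3 + j := by
  rw [Nat.factorization_mul ha (by positivity), Nat.factorization_pow]
  constructor <;> simp [f62, f63]

lemma ne_aux : (∀ j k : ℕ, 6^j ≠ 2*6^k) ∧ (∀ j k : ℕ, 6^j ≠ 3*6^k) ∧
    (∀ j k : ℕ, 2*6^j ≠ 3*6^k) := by
  have e1 : ∀ p : ℕ, (Nat.factorization 1) p = 0 := by simp
  have e22 : (Nat.factorization 2) 2 = 1 := by
    simp [Nat.prime_two.factorization, Finsupp.single_apply]
  have e23 : (Nat.factorization 2) 3 = 0 := by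
    simp [Nat.prime_two.factorization, Finsupp.single_apply]
  have e32 : (Nat.factorization 3) 2 = 0 := by
    simp [Nat.prime_three.factorization, Finsupp.single_apply]
  have e33 : (Nat.factorization 3) 3 = 1 := by
    simp [Nat.prime_three.factorization, Finsupp.single_apply]
  refine ⟨fun j k h => ?_, fun j k h => ?_, fun j k h => ?_⟩
  · have h2 := congrArg (Nat.factorization · 2) (one_mul (6^j) ▸ h)
    have h3 := congrArg (Nat.factorization · 3) (one_mul (6^j) ▸ h)
    simp only [(fact_aux 1 j one_ne_zero).1, (fact_aux 1 j one_ne_zero).2,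
      (fact_aux 2 k two_ne_zero).1, (fact_aux 2 k two_ne_zero).2, e1, e22, e23] at h2 h3
    omega
  · have h2 := congrArg (Nat.factorization · 2) (one_mul (6^j) ▸ h)
    have h3 := congrArg (Nat.factorization · 3) (one_mul (6^j) ▸ h)
    simp only [(fact_aux 1 j one_ne_zero).1, (fact_aux 1 j one_ne_zero).2,
      (fact_aux 3 k three_ne_zero).1, (fact_aux 3 k three_ne_zero).2, e1, e32, e33] at h2 h3
    omega
  · have h2 := congrArg (Nat.factorization · 2) h
    have h3 := congrArg (Nat.factorization · 3) h
    simp only [(fact_aux 2 j two_ne_zero).1, (fact_aux 2 j two_ne_zero).2,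
      (fact_aux 3 k three_ne_zero).1, (fact_aux 3 k three_ne_zero).2, e22, e23, e32, e33] at h2 h3
    omega

noncomputable def cnt (M : ℕ) : ℕ := ((Finset.range M).filter (fun j => Even (s j))).card

lemma cnt_succ (M : ℕ) : cnt (M+1) = cnt M + (if Even (s M) then 1 else 0) := by
  rw [cnt, cnt, Finset.range_add_one, Finset.filter_insert]
  split <;> simp [Finset.card_insert_of_notMem]

lemma cnt_bound (M : ℕ) : M ≤ 2 * cnt M + 1 ∧ 2 * cnt M ≤ M + 1 := by
  have key : ∀ t, cnt (2*t) = t := by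
    intro t
    induction t with
    | zero => simp [cnt]
    | succ t ih =>
      have : 2*(t+1) = (2*t+1)+1 := by ring
      rw [this, cnt_succ, show 2*t+1 = (2*t)+1 from rfl, cnt_succ, ih, s_two_mul,
        s_two_mul_add_one]
      rcases Nat.even_or_odd (s t) with h | h
      · simp [h, Nat.even_add_one, Nat.not_even_iff_odd.mpr (Even.add_one h)]
      · simp [Nat.not_even_iff_odd.mpr h, Odd.add_one h]
  rcases Nat.even_or_odd M with ⟨t, ht⟩ | ⟨t, ht⟩
  · subst ht; have := key t; rw [two_mul] at this; omega
  · have h1 := key t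
    have h2 : cnt (2*t+1) = cnt (2*t) + (if Even (s (2*t)) then 1 else 0) := cnt_succ _
    subst ht; split at h2 <;> omega

lemma cnt_le (M : ℕ) : cnt M ≤ M := by
  calc cnt M ≤ (Finset.range M).card := Finset.card_filter_le _ _
  _ = M := Finset.card_range M

lemma tendsto_helper (c : ℝ) (g : ℕ → ℕ) (h : ∀ N, 1 ≤ N → |(g N : ℝ) - c * N| ≤ 1) :
    Tendsto (fun N => (g N : ℝ) / N) atTop (𝓝 c) := by
  rw [← tendsto_sub_nhds_zero_iff]
  refine squeeze_zero_norm' ?_ tendsto_one_div_atTop_nhds_zero_nat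
  filter_upwards [eventually_ge_atTop 1] with N hN
  have hN' : (0:ℝ) < N := by positivity
  rw [Real.norm_eq_abs, show (g N : ℝ)/N - c = ((g N : ℝ) - c * N)/N by field_simp,
    abs_div, abs_of_pos hN']
  gcongr
  exact h N hN

/-- Every Thue–Morse partial product has the form `a·6^k` with `a ∈ {1,2,3}`, and the set of
indices `m` for which `t*_m = a·6^k` for some `k` has density `1/2` for `a = 1` and `1/4`
for `a = 2, 3`. -/
theorem tmProd_form_and_density :
    (∀ n : ℕ, 1 ≤ n → ∃ a ∈ ({1, 2, 3} : Set ℕ), ∃ k : ℕ, tmProd n = a * 6 ^ k) ∧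
    (∀ a ∈ ({1, 2, 3} : Set ℕ),
      Tendsto (fun N : ℕ =>
          (Nat.card ↑{m : ℕ | m ∈ Set.Icc 1 N ∧ ∃ k : ℕ, tmProd m = a * 6 ^ k} : ℝ) / N)
        atTop (𝓝 (if a = 1 then 1 / 2 else 1 / 4))) := by
  obtain ⟨ne1, ne2, ne3⟩ := ne_aux
  constructor
  · intro n hn
    rcases Nat.even_or_odd n with ⟨j, hj⟩ | ⟨j, hj⟩
    · refine ⟨1, by simp, j, ?_⟩
      rw [hj, ← two_mul, tmProd_even, one_mul]
    · rcases Nat.even_or_odd (s j) with h | h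
      · refine ⟨2, by simp, j, ?_⟩
        rw [hj, tmProd_odd, if_pos h]
      · refine ⟨3, by simp, j, ?_⟩
        rw [hj, tmProd_odd, if_neg (Nat.not_even_iff_odd.mpr h)]
  · -- density part
    intro a ha
    simp only [Set.mem_insert_iff, Set.mem_singleton_iff] at ha
    -- set equalities
    rcases ha with rfl | rfl | rfl
    · -- a = 1
      have hset : ∀ N : ℕ, {m : ℕ | m ∈ Set.Icc 1 N ∧ ∃ k : ℕ, tmProd m = 1 * 6 ^ k}
          = ↑((Finset.Icc 1 N).filter (fun m => 2 ∣ m)) := by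
        intro N
        ext m
        simp only [Set.mem_setOf_eq, Set.mem_Icc, Finset.coe_filter, Finset.mem_Icc, one_mul]
        constructor
        · rintro ⟨hm, k, hk⟩
          refine ⟨hm, ?_⟩
          rcases Nat.even_or_odd m with ⟨j, rfl⟩ | ⟨j, rfl⟩
          · omega
          · rw [tmProd_odd] at hk
            by_cases h : Even (s j)
            · rw [if_pos h] at hk; exact absurd hk.symm (ne1 k j)
            · rw [if_neg h] at hk; exact absurd hk.symm (ne2 k j)
        · rintro ⟨hm, j, rfl⟩
          exact ⟨hm, j, by rw [tmProd_even]⟩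
      have hcard : ∀ N : ℕ, ((Finset.Icc 1 N).filter (fun m => 2 ∣ m)).card = N / 2 := by
        intro N
        rw [show Finset.Icc 1 N = Finset.Ioc 0 N from Finset.Icc_add_one_left_eq_Ioc 0 N]
        exact Nat.Ioc_filter_dvd_card_eq_div N 2
      simp only [hset, Nat.card_coe_set_eq, Set.ncard_coe_finset, hcard, reduceIte]
      apply tendsto_helper
      intro N hN
      have h1 : 2 * (N / 2) ≤ N := by omega
      have h2 : N ≤ 2 * (N / 2) + 1 := by omega
      have r1 : ((2 * (N / 2) : ℕ) : ℝ) ≤ (N : ℝ) := Nat.cast_le.mpr h1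
      have r2 : (N : ℝ) ≤ ((2 * (N / 2) + 1 : ℕ) : ℝ) := Nat.cast_le.mpr h2
      push_cast at r1 r2
      rw [abs_le]
      constructor <;> linarith
    · -- a = 2
      have hset : ∀ N : ℕ, {m : ℕ | m ∈ Set.Icc 1 N ∧ ∃ k : ℕ, tmProd m = 2 * 6 ^ k}
          = ↑(Finset.image (fun j => 2*j+1)
              (((Finset.range ((N+1)/2)).filter (fun j => Even (s j))))) := by
        intro N
        ext m
        simp only [Set.mem_setOf_eq, Set.mem_Icc, Finset.coe_image, Set.mem_image,
          Finset.coe_filter, Set.mem_setOf_eq, Finset.mem_range]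
        constructor
        · rintro ⟨hm, k, hk⟩
          rcases Nat.even_or_odd m with ⟨j, hj⟩ | ⟨j, hj⟩
          · exfalso
            rw [hj, ← two_mul, tmProd_even] at hk
            exact ne1 j k hk
          · subst hj
            rw [tmProd_odd] at hk
            by_cases h : Even (s j)
            · exact ⟨j, ⟨by omega, h⟩, rfl⟩
            · rw [if_neg h] at hk; exact absurd hk.symm (ne3 k j)
        · rintro ⟨j, ⟨hj, hev⟩, rfl⟩
          refine ⟨by omega, j, ?_⟩
          rw [tmProd_odd, if_pos hev]
      have hcard : ∀ N : ℕ, (Finset.image (fun j => 2*j+1)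
          (((Finset.range ((N+1)/2)).filter (fun j => Even (s j))))).card = cnt ((N+1)/2) := by
        intro N
        rw [Finset.card_image_of_injective _ (fun a b h => by omega)]
        rfl
      simp only [hset, Nat.card_coe_set_eq, Set.ncard_coe_finset, hcard]
      rw [if_neg (by norm_num)]
      apply tendsto_helper
      intro N hN
      set M := (N+1)/2 with hM
      obtain ⟨c1, c2⟩ := cnt_bound M
      have hA : N ≤ 4 * cnt M + 3 := by omega
      have hB : 4 * cnt M ≤ N + 3 := by omega
      have r1 : ((N : ℕ) : ℝ) ≤ ((4 * cnt M + 3 : ℕ) : ℝ) := Nat.cast_le.mpr hA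
      have r2 : ((4 * cnt M : ℕ) : ℝ) ≤ ((N + 3 : ℕ) : ℝ) := Nat.cast_le.mpr hB
      push_cast at r1 r2
      rw [abs_le]
      constructor <;> linarith
    · -- a = 3
      have hset : ∀ N : ℕ, {m : ℕ | m ∈ Set.Icc 1 N ∧ ∃ k : ℕ, tmProd m = 3 * 6 ^ k}
          = ↑(Finset.image (fun j => 2*j+1)
              (((Finset.range ((N+1)/2)).filter (fun j => ¬ Even (s j))))) := by
        intro N
        ext m
        simp only [Set.mem_setOf_eq, Set.mem_Icc, Finset.coe_image, Set.mem_image,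
          Finset.coe_filter, Set.mem_setOf_eq, Finset.mem_range]
        constructor
        · rintro ⟨hm, k, hk⟩
          rcases Nat.even_or_odd m with ⟨j, hj⟩ | ⟨j, hj⟩
          · exfalso
            rw [hj, ← two_mul, tmProd_even] at hk
            exact ne2 j k hk
          · subst hj
            rw [tmProd_odd] at hk
            by_cases h : Even (s j)
            · rw [if_pos h] at hk; exact absurd hk (ne3 j k)
            · exact ⟨j, ⟨by omega, h⟩, rfl⟩
        · rintro ⟨j, ⟨hj, hev⟩, rfl⟩
          refine ⟨by omega, j, ?_⟩
          rw [tmProd_odd, if_neg hev]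
      have hcard : ∀ N : ℕ, (Finset.image (fun j => 2*j+1)
          (((Finset.range ((N+1)/2)).filter (fun j => ¬ Even (s j))))).card
          = (N+1)/2 - cnt ((N+1)/2) := by
        intro N
        rw [Finset.card_image_of_injective _ (fun a b h => by omega)]
        have := Finset.card_filter_add_card_filter_not
          (s := Finset.range ((N+1)/2)) (fun j => Even (s j))
        rw [Finset.card_range] at this
        have hle := cnt_le ((N+1)/2)
        rw [cnt] at hle ⊢
        omega
      simp only [hset, Nat.card_coe_set_eq, Set.ncard_coe_finset, hcard]
      rw [if_neg (by norm_num)]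
      apply tendsto_helper
      intro N hN
      set M := (N+1)/2 with hM
      obtain ⟨c1, c2⟩ := cnt_bound M
      have hle := cnt_le M
      have hA : N ≤ 4 * (M - cnt M) + 3 := by omega
      have hB : 4 * (M - cnt M) ≤ N + 3 := by omega
      have r1 : ((N : ℕ) : ℝ) ≤ ((4 * (M - cnt M) + 3 : ℕ) : ℝ) := Nat.cast_le.mpr hA
      have r2 : ((4 * (M - cnt M) : ℕ) : ℝ) ≤ ((N + 3 : ℕ) : ℝ) := Nat.cast_le.mpr hB
      push_cast at r1 r2
      rw [abs_le]
      constructor <;> linarith
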